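/- Let V ⊂ \bar{F}_q be a finite-dimensional F_q-subspace, and let f(τ) ∈ \bar{F}_q{τ} be a separable skew polynomial (nonzero constant coefficient) with ker φ_f = V. Then f can be chosen with coefficients in F_{q^d} if and only if the q^d-power Frobenius x ↦ x^{q^d} maps V bijectively onto itself. -/

import Mathlib

open Polynomial

/-- Fixed points of the `card F` power map lie in the image of `F`. -/
lemma aux_mem_range_algebraMap_of_pow_card_eq {F K : Type*} [Field F] [Fintype F] [Field K]
    [Algebra F K] {x : K} (hx : x ^ Fintype.card F = x) :
    ∃ a : F, algebraMap F K a = x := by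
  classical
  set m := Fintype.card F with hm
  have hm2 : 2 ≤ m := Fintype.one_lt_card
  set P : Polynomial K := X ^ m - X with hP
  have hdeg : P.natDegree = m := by
    rw [hP, natDegree_sub_eq_left_of_natDegree_lt
      (by simp only [natDegree_X_pow, natDegree_X]; omega), natDegree_X_pow]
  have hP0 : P ≠ 0 := by
    intro h
    rw [h, natDegree_zero] at hdeg
    omega
  set T : Finset K := Finset.image (algebraMap F K) Finset.univ with hT
  have hTsub : T ⊆ P.roots.toFinset := by
    intro y hy
    obtain ⟨a, -, rfl⟩ := Finset.mem_image.mp hy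
    rw [Multiset.mem_toFinset, mem_roots hP0]
    simp only [P, IsRoot, eval_sub, eval_pow, eval_X, sub_eq_zero]
    rw [← map_pow, FiniteField.pow_card]
  have hcard : P.roots.toFinset.card ≤ T.card := by
    have h1 : P.roots.toFinset.card ≤ m :=
      le_trans (Multiset.toFinset_card_le _) (le_trans (card_roots' P) hdeg.le)
    have h2 : T.card = m := by
      rw [hT, Finset.card_image_of_injective _ (algebraMap F K).injective,
        Finset.card_univ, hm]
    omega
  have heq : T = P.roots.toFinset := Finset.eq_of_subset_of_card_le hTsub hcard
  have hxmem : x ∈ P.roots.toFinset := by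
    rw [Multiset.mem_toFinset, mem_roots hP0]
    simp only [P, IsRoot, eval_sub, eval_pow, eval_X, sub_eq_zero]
    exact hx
  rw [← heq] at hxmem
  obtain ⟨a, -, ha⟩ := Finset.mem_image.mp hxmem
  exact ⟨a, ha⟩

/-- Let `V ⊂ \bar{F}_q` be a finite-dimensional `F_q`-subspace which is the kernel
of some separable skew polynomial (a separable additive polynomial, i.e. one with nonzero
constant coefficient).  Then such a skew polynomial `f` with `ker φ_f = V` can be chosen with
coefficients in `F_{q^d}` if and only if the `q^d`-power Frobenius `x ↦ x^{q^d}` maps `V`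
bijectively onto itself.  Here `\bar{F}_q` is realized as an algebraic closure of `F_{q^d}`. -/
theorem separable_skew_poly_coeffs_in_Fqd_iff_frobenius_invariant
    (Fq Fqd : Type) [Field Fq] [Fintype Fq] [Field Fqd] [Fintype Fqd] [Algebra Fq Fqd]
    (q d : ℕ) (hq : q = Fintype.card Fq) (hqd : Fintype.card Fqd = q ^ d)
    (V : Submodule Fq (AlgebraicClosure Fqd)) [FiniteDimensional Fq V]
    (hker : ∃ (n : ℕ) (b : ℕ → AlgebraicClosure Fqd), b 0 ≠ 0 ∧
      (V : Set (AlgebraicClosure Fqd)) =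
        {x | ∑ i ∈ Finset.range (n + 1), b i * x ^ q ^ i = 0}) :
    (∃ (n : ℕ) (a : ℕ → Fqd), a 0 ≠ 0 ∧
        (V : Set (AlgebraicClosure Fqd)) =
          {x | ∑ i ∈ Finset.range (n + 1),
            algebraMap Fqd (AlgebraicClosure Fqd) (a i) * x ^ q ^ i = 0}) ↔
      Set.BijOn (fun x : AlgebraicClosure Fqd => x ^ q ^ d)
        (V : Set (AlgebraicClosure Fqd)) (V : Set (AlgebraicClosure Fqd)) := by
  classical
  set K := AlgebraicClosure Fqd with hKdef
  have hq2 : 2 ≤ q := hq ▸ Fintype.one_lt_card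
  -- characteristic setup
  set p := ringChar Fq with hpdef
  haveI hcFq : CharP Fq p := ringChar.charP Fq
  have hp : p.Prime := CharP.char_is_prime Fq p
  obtain ⟨k, -, hk⟩ := FiniteField.card Fq p
  have hqpk : q = p ^ (k : ℕ) := hq.trans hk
  haveI : CharP Fqd p := charP_of_injective_algebraMap (algebraMap Fq Fqd).injective p
  haveI : CharP K p := charP_of_injective_algebraMap (algebraMap Fqd K).injective p
  haveI : ExpChar K p := .prime hp
  set φ : K →+* K := iterateFrobenius K p ((k : ℕ) * d) with hφdef
  have hφ : ∀ x : K, φ x = x ^ q ^ d := by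
    intro x
    rw [hφdef, iterateFrobenius_def, hqpk, ← pow_mul]
  have hfixalg : ∀ a : Fqd, φ (algebraMap Fqd K a) = algebraMap Fqd K a := by
    intro a
    rw [hφ, ← map_pow, ← hqd, FiniteField.pow_card]
  have hφinj : Function.Injective φ := φ.injective
  have hfun : (fun x : K => x ^ q ^ d) = φ := by
    funext x; rw [hφ]
  constructor
  · -- coefficients in Fqd → Frobenius-stable
    rintro ⟨n, a, ha0, hA⟩
    rw [hfun]
    have hmaps : Set.MapsTo φ (V : Set K) (V : Set K) := by
      intro x hx
      rw [hA] at hx ⊢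
      have hx' : ∑ i ∈ Finset.range (n + 1),
          algebraMap Fqd K (a i) * x ^ q ^ i = 0 := hx
      show ∑ i ∈ Finset.range (n + 1), algebraMap Fqd K (a i) * φ x ^ q ^ i = 0
      have : φ (∑ i ∈ Finset.range (n + 1), algebraMap Fqd K (a i) * x ^ q ^ i) = 0 := by
        rw [hx', map_zero]
      rw [map_sum] at this
      rw [← this]
      refine Finset.sum_congr rfl fun i _ => ?_
      rw [map_mul, hfixalg, map_pow]
    have hfinV : (V : Set K).Finite := by
      have : Finite ↥(V : Set K) := by
        exact Module.finite_of_finite Fq (M := V)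
      exact Set.toFinite _
    exact (hfinV.injOn_iff_bijOn_of_mapsTo hmaps).mp hφinj.injOn
  · -- Frobenius-stable → coefficients in Fqd
    intro hbij
    obtain ⟨n, b, hb0, hV⟩ := hker
    rw [hfun] at hbij
    set g : Polynomial K := ∑ i ∈ Finset.range (n + 1), C (b i) * X ^ q ^ i with hgdef
    have heval : ∀ x : K, g.eval x = ∑ i ∈ Finset.range (n + 1), b i * x ^ q ^ i := by
      intro x
      rw [hgdef, eval_finset_sum]
      simp
    have hcoeff : ∀ i ≤ n, g.coeff (q ^ i) = b i := by
      intro i hi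
      rw [hgdef, finset_sum_coeff, Finset.sum_eq_single i]
      · simp [coeff_C_mul, coeff_X_pow]
      · intro j hj hne
        rw [coeff_C_mul, coeff_X_pow,
          if_neg (fun h => hne (Nat.pow_right_injective hq2 h.symm)), mul_zero]
      · intro h
        exact absurd (Finset.mem_range.mpr (by omega)) h
    have hg0 : g ≠ 0 := by
      intro h
      apply hb0
      have := hcoeff 0 (Nat.zero_le n)
      rw [h] at this
      simpa using this.symm
    have hpq : p ∣ q := by
      rw [hqpk]
      exact dvd_pow_self p k.2.ne'
    have hder : derivative g = C (b 0) := by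
      rw [hgdef, derivative_sum, Finset.sum_eq_single 0]
      · simp
      · intro i hi hne
        rw [derivative_C_mul_X_pow]
        have : ((q ^ i : ℕ) : K) = 0 :=
          (CharP.cast_eq_zero_iff K p _).mpr (dvd_pow hpq hne)
        simp [this]
      · intro h
        exact absurd (Finset.mem_range.mpr (by omega)) h
    have hsep : g.Separable := by
      rw [Polynomial.separable_def, hder]
      exact ⟨0, C (b 0)⁻¹, by simp [← C_mul, inv_mul_cancel₀ hb0]⟩
    have hmemroots : ∀ x : K, x ∈ g.roots ↔ x ∈ (V : Set K) := by
      intro x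
      rw [mem_roots hg0, IsRoot, heval, hV]
      rfl
    set g' : Polynomial K := g.map φ with hg'def
    have hg'0 : g' ≠ 0 := (Polynomial.map_ne_zero_iff hφinj).mpr hg0
    have hsep' : g'.Separable := hsep.map
    have heval' : ∀ x : K, g'.eval (φ x) = φ (g.eval x) := by
      intro x
      rw [hg'def, eval_map, eval₂_at_apply]
    have hmemroots' : ∀ x : K, x ∈ g'.roots ↔ x ∈ (V : Set K) := by
      intro x
      rw [mem_roots hg'0, IsRoot]
      constructor
      · intro h
        obtain ⟨y, rfl⟩ := IsAlgClosed.exists_pow_nat_eq x (n := q ^ d)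
          (pow_pos (by omega) d)
        rw [← hφ, heval'] at h
        have hy : y ∈ (V : Set K) := by
          rw [← hmemroots, mem_roots hg0, IsRoot]
          exact hφinj (by rwa [map_zero])
        have := hbij.mapsTo hy
        rwa [← hφ]
      · intro h
        obtain ⟨y, hyV, hy⟩ := hbij.surjOn h
        rw [← hy, heval']
        have : g.eval y = 0 := by
          have := (hmemroots y).mpr hyV
          rwa [mem_roots hg0, IsRoot] at this
        rw [this, map_zero]
    have hrootseq : g'.roots = g.roots := by
      rw [Multiset.Nodup.ext (nodup_roots hsep') (nodup_roots hsep)]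
      intro x
      rw [hmemroots', hmemroots]
    -- compare the two monic normalizations
    set u : K := g.leadingCoeff with hudef
    have hu : u ≠ 0 := leadingCoeff_ne_zero.mpr hg0
    have hlc' : g'.leadingCoeff = φ u := leadingCoeff_map (p := g) φ
    have hmon1 : (g * C u⁻¹).Monic := monic_mul_leadingCoeff_inv hg0
    have hmon2 : (g' * C (g'.leadingCoeff)⁻¹).Monic := monic_mul_leadingCoeff_inv hg'0
    have hrm1 : (g * C u⁻¹).roots = g.roots := by
      rw [mul_comm, roots_C_mul _ (inv_ne_zero hu)]
    have hrm2 : (g' * C (g'.leadingCoeff)⁻¹).roots = g.roots := by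
      rw [mul_comm, roots_C_mul _ (inv_ne_zero (hlc' ▸ (map_ne_zero φ).mpr hu)), hrootseq]
    have heq12 : g * C u⁻¹ = g' * C (g'.leadingCoeff)⁻¹ := by
      rw [(IsAlgClosed.splits _).eq_prod_roots_of_monic hmon1,
        (IsAlgClosed.splits _).eq_prod_roots_of_monic hmon2,
        hrm1, hrm2]
    have hfixc : ∀ i ≤ n, φ (b i * u⁻¹) = b i * u⁻¹ := by
      intro i hi
      have h1 : (g * C u⁻¹).coeff (q ^ i) = b i * u⁻¹ := by
        rw [coeff_mul_C, hcoeff i hi]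
      have h2 : (g' * C (g'.leadingCoeff)⁻¹).coeff (q ^ i) = φ (b i) * (φ u)⁻¹ := by
        rw [coeff_mul_C, hlc', hg'def, coeff_map, hcoeff i hi]
      rw [map_mul, map_inv₀, ← h2, ← heq12, h1]
    have hex : ∀ i, i ≤ n → ∃ a : Fqd, algebraMap Fqd K a = b i * u⁻¹ := by
      intro i hi
      apply aux_mem_range_algebraMap_of_pow_card_eq
      rw [hqd, ← hφ, hfixc i hi]
    choose a0 ha0 using hex
    refine ⟨n, fun i => if h : i ≤ n then a0 i h else 0, ?_, ?_⟩
    · simp only [Nat.zero_le, dif_pos]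
      intro h
      have := ha0 0 (Nat.zero_le n)
      rw [h, map_zero] at this
      exact (mul_ne_zero hb0 (inv_ne_zero hu)) this.symm
    · rw [hV]
      ext x
      simp only [Set.mem_setOf_eq]
      have hsum : ∑ i ∈ Finset.range (n + 1),
          algebraMap Fqd K (if h : i ≤ n then a0 i h else 0) * x ^ q ^ i =
          (∑ i ∈ Finset.range (n + 1), b i * x ^ q ^ i) * u⁻¹ := by
        rw [Finset.sum_mul]
        refine Finset.sum_congr rfl fun i hi => ?_
        have hi' : i ≤ n := by
          have := Finset.mem_range.mp hi; omega
        rw [dif_pos hi', ha0 i hi']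
        ring
      rw [hsum]
      constructor
      · intro h; rw [h, zero_mul]
      · intro h
        rcases mul_eq_zero.mp h with h' | h'
        · exact h'
        · exact absurd h' (inv_ne_zero hu)
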